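/- arXiv:math/0011254 — 5 statements merged into one kernel-verified Lean document; each statement's English description precedes it below -/
import Mathlib

section
/- For every real x ≥ 1, one has log x = ∫_1^x M(t) · ⌊x/t⌋ · t^{-1} dt. -/
open MeasureTheory Real Filter Set

/-- The Mertens function extended to real arguments: `M x = ∑_{1 ≤ k ≤ x} μ(k)`. -/
noncomputable def mertens (x : ℝ) : ℝ :=
  ∑ k ∈ Finset.Icc 1 ⌊x⌋₊, (ArithmeticFunction.moebius k : ℝ)

open Classical in
private lemma mertens_aux_integrable (x a b c : ℝ) (hsub : Set.uIcc a b ⊆ Set.Icc 1 x)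
    (k m : ℕ) (hm : 1 ≤ m) :
    IntervalIntegrable (fun t : ℝ =>
      if (k:ℝ) ≤ t ∧ (m:ℝ) * t ≤ x then c / t else 0) volume a b := by
  have hfun : (fun t : ℝ => if (k:ℝ) ≤ t ∧ (m:ℝ) * t ≤ x then c / t else 0)
      = Set.indicator (Set.Icc (k:ℝ) (x / m)) (fun t => c / t) := by
    funext t
    have hm0 : (0:ℝ) < m := by exact_mod_cast hm
    simp only [Set.indicator, Set.mem_Icc, le_div_iff₀ hm0]
    congr 1
    rw [mul_comm]
  have hbase : IntervalIntegrable (fun t : ℝ => c / t) volume a b := by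
    apply ContinuousOn.intervalIntegrable
    apply ContinuousOn.div continuousOn_const continuousOn_id
    intro t ht
    have h1 := (hsub ht).1
    intro h; simp only [id] at h; rw [h] at h1; linarith
  rw [hfun, intervalIntegrable_iff, IntegrableOn,
    integrable_indicator_iff measurableSet_Icc, IntegrableOn,
    Measure.restrict_restrict measurableSet_Icc]
  exact (intervalIntegrable_iff.mp hbase).mono_set Set.inter_subset_right

open Classical in
private lemma mertens_aux_value (x : ℝ) (hx : 1 ≤ x) (c : ℝ) (k m : ℕ) (hk : 1 ≤ k) (hm : 1 ≤ m)
    (hkx : (k:ℝ) ≤ x) :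
    (∫ t in (1:ℝ)..x, if (k:ℝ) ≤ t ∧ (m:ℝ) * t ≤ x then c / t else 0)
      = if (k:ℝ) * m ≤ x then c * Real.log (x / (k * m)) else 0 := by
  set f : ℝ → ℝ := fun t => if (k:ℝ) ≤ t ∧ (m:ℝ) * t ≤ x then c / t else 0 with hf
  have hInt : ∀ a b : ℝ, Set.uIcc a b ⊆ Set.Icc 1 x → IntervalIntegrable f volume a b :=
    fun a b hsub => mertens_aux_integrable x a b c hsub k m hm
  have hk0 : (0:ℝ) < k := by exact_mod_cast hk
  have hm0 : (0:ℝ) < m := by exact_mod_cast hm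
  have hk1 : (1:ℝ) ≤ k := by exact_mod_cast hk
  have hm1 : (1:ℝ) ≤ m := by exact_mod_cast hm
  by_cases hkm : (k:ℝ) * m ≤ x
  · rw [if_pos hkm]
    have hkxm : (k:ℝ) ≤ x / m := (le_div_iff₀ hm0).2 hkm
    have hxmx : x / m ≤ x := div_le_self (by linarith) hm1
    have h1 : (∫ t in (1:ℝ)..(k:ℝ), f t) = 0 := by
      have hae : ∀ᵐ t : ℝ, t ≠ (k:ℝ) := by
        refine ae_iff.2 ?_
        simpa using Real.volume_singleton
      rw [← intervalIntegral.integral_zero (a := (1:ℝ)) (b := (k:ℝ)) (μ := volume)]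
      apply intervalIntegral.integral_congr_ae
      filter_upwards [hae] with t hne ht
      rw [Set.uIoc_of_le hk1] at ht
      have : ¬ ((k:ℝ) ≤ t) := by
        rcases lt_or_eq_of_le ht.2 with h | h
        · exact not_le.2 h
        · exact absurd h hne
      simp [hf, this]
    have h3 : (∫ t in (x/m)..x, f t) = 0 := by
      rw [← intervalIntegral.integral_zero (a := x/m) (b := x) (μ := volume)]
      apply intervalIntegral.integral_congr_ae
      apply ae_of_all
      intro t ht
      rw [Set.uIoc_of_le hxmx] at ht
      have : ¬ ((m:ℝ) * t ≤ x) := by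
        have := ht.1
        rw [div_lt_iff₀ hm0] at this
        nlinarith
      simp [hf, this]
    have h2 : (∫ t in (k:ℝ)..(x/m), f t) = c * Real.log (x / (k * m)) := by
      have heq : Set.EqOn f (fun t => c * t⁻¹) (Set.uIcc (k:ℝ) (x/m)) := by
        intro t ht
        rw [Set.uIcc_of_le hkxm, Set.mem_Icc] at ht
        have ha : (k:ℝ) ≤ t := ht.1
        have hb : (m:ℝ) * t ≤ x := by
          rw [mul_comm, ← le_div_iff₀ hm0]; exact ht.2
        show (if (k:ℝ) ≤ t ∧ (m:ℝ) * t ≤ x then c / t else 0) = c * t⁻¹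
        rw [if_pos ⟨ha, hb⟩, div_eq_mul_inv]
      rw [intervalIntegral.integral_congr heq, intervalIntegral.integral_const_mul,
        integral_inv (by
          rw [Set.uIcc_of_le hkxm]
          intro h
          have := (Set.mem_Icc.1 h).1; linarith)]
      congr 1
      rw [div_div]
      ring_nf
    have hi12 : (∫ t in (1:ℝ)..(x/m), f t) = 0 + c * Real.log (x / (k * m)) := by
      rw [← h1, ← h2]
      exact (intervalIntegral.integral_add_adjacent_intervals
        (hInt 1 k (by rw [Set.uIcc_of_le hk1]; exact Set.Icc_subset_Icc le_rfl hkx))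
        (hInt k (x/m) (by rw [Set.uIcc_of_le hkxm]; exact Set.Icc_subset_Icc hk1 hxmx))).symm
    calc (∫ t in (1:ℝ)..x, f t)
        = (∫ t in (1:ℝ)..(x/m), f t) + (∫ t in (x/m)..x, f t) :=
          (intervalIntegral.integral_add_adjacent_intervals
            (hInt 1 (x/m) (by rw [Set.uIcc_of_le (le_trans hk1 hkxm)]; exact Set.Icc_subset_Icc le_rfl hxmx))
            (hInt (x/m) x (by rw [Set.uIcc_of_le hxmx]; exact Set.Icc_subset_Icc (le_trans hk1 hkxm) le_rfl))).symm
      _ = c * Real.log (x / (k * m)) := by rw [hi12, h3]; ring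
  · rw [if_neg hkm]
    have : ∀ t : ℝ, f t = 0 := by
      intro t
      simp only [hf]
      rw [if_neg]
      rintro ⟨h1, h2⟩
      apply hkm
      nlinarith
    simp [funext this]

open Classical in
private lemma mertens_aux_sum (x : ℝ) (hx : 1 ≤ x) :
    (∑ k ∈ Finset.Icc 1 ⌊x⌋₊, ∑ m ∈ Finset.Icc 1 ⌊x⌋₊,
      if (k:ℝ) * m ≤ x then (ArithmeticFunction.moebius k : ℝ) * Real.log (x / (k * m)) else 0)
      = Real.log x := by
  set N := ⌊x⌋₊ with hN
  have hN1 : 1 ≤ N := Nat.le_floor (by simpa using hx)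
  have hx0 : (0:ℝ) ≤ x := by linarith
  have hcond : ∀ k m : ℕ, ((k:ℝ) * m ≤ x) ↔ (k * m ≤ N) := by
    intro k m
    rw [hN, Nat.le_floor_iff hx0]
    push_cast
    rfl
  have step1 : (∑ k ∈ Finset.Icc 1 N, ∑ m ∈ Finset.Icc 1 N,
      if (k:ℝ) * m ≤ x then (ArithmeticFunction.moebius k : ℝ) * Real.log (x / (k * m)) else 0)
      = ∑ p ∈ ((Finset.Icc 1 N) ×ˢ (Finset.Icc 1 N)).filter (fun p => p.1 * p.2 ≤ N),
          (ArithmeticFunction.moebius p.1 : ℝ) * Real.log (x / (p.1 * p.2)) := by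
    rw [Finset.sum_filter, Finset.sum_product]
    refine Finset.sum_congr rfl fun k _ => Finset.sum_congr rfl fun m _ => ?_
    exact if_congr (hcond k m) rfl rfl
  have step2 : (∑ p ∈ ((Finset.Icc 1 N) ×ˢ (Finset.Icc 1 N)).filter (fun p => p.1 * p.2 ≤ N),
          (ArithmeticFunction.moebius p.1 : ℝ) * Real.log (x / (p.1 * p.2)))
      = ∑ q ∈ (Finset.Icc 1 N).sigma (fun n => n.divisorsAntidiagonal),
          (ArithmeticFunction.moebius q.2.1 : ℝ) * Real.log (x / q.1) := by
    refine Finset.sum_nbij' (fun p => ⟨p.1 * p.2, p⟩) (fun q => q.2) ?_ ?_ ?_ ?_ ?_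
    · intro p hp
      simp only [Finset.mem_filter, Finset.mem_product, Finset.mem_Icc] at hp
      obtain ⟨⟨⟨hk1, _⟩, ⟨hm1, _⟩⟩, hpm⟩ := hp
      simp only [Finset.mem_sigma, Finset.mem_Icc, Nat.mem_divisorsAntidiagonal]
      refine ⟨⟨Nat.one_le_iff_ne_zero.2 (Nat.mul_ne_zero (by omega) (by omega)), hpm⟩, ?_⟩
      simp
      omega
    · intro q hq
      simp only [Finset.mem_sigma, Finset.mem_Icc, Nat.mem_divisorsAntidiagonal] at hq
      obtain ⟨⟨hn1, hnN⟩, heq, hne⟩ := hq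
      simp only [Finset.mem_filter, Finset.mem_product, Finset.mem_Icc]
      have h1 : q.2.1 ≠ 0 := by rintro h; rw [h] at heq; simp at heq; omega
      have h2 : q.2.2 ≠ 0 := by rintro h; rw [h] at heq; simp at heq; omega
      have hle1 : q.2.1 ≤ q.1 := heq ▸ Nat.le_mul_of_pos_right _ (by omega)
      have hle2 : q.2.2 ≤ q.1 := heq ▸ Nat.le_mul_of_pos_left _ (by omega)
      exact ⟨⟨⟨by omega, hle1.trans hnN⟩, ⟨by omega, hle2.trans hnN⟩⟩, heq ▸ hnN⟩
    · intro p hp; rfl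
    · intro q hq
      simp only [Finset.mem_sigma, Finset.mem_Icc, Nat.mem_divisorsAntidiagonal] at hq
      obtain ⟨_, heq, _⟩ := hq
      exact Sigma.ext heq HEq.rfl
    · intro p hp
      push_cast
      rfl
  rw [step1, step2, Finset.sum_sigma]
  have inner : ∀ n ∈ Finset.Icc 1 N,
      (∑ p ∈ n.divisorsAntidiagonal, (ArithmeticFunction.moebius p.1 : ℝ) * Real.log (x / n))
      = if n = 1 then Real.log x else 0 := by
    intro n hn
    rw [← Finset.sum_mul]
    have hmoeb : (∑ p ∈ n.divisorsAntidiagonal, (ArithmeticFunction.moebius p.1 : ℝ))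
        = if n = 1 then 1 else 0 := by
      rw [Nat.sum_divisorsAntidiagonal (f := fun a _ => (ArithmeticFunction.moebius a : ℝ))]
      have h := congrArg (fun f => f n) ArithmeticFunction.moebius_mul_coe_zeta
      simp only [ArithmeticFunction.coe_mul_zeta_apply, ArithmeticFunction.one_apply] at h
      have := congrArg (fun z : ℤ => (z : ℝ)) h
      push_cast at this
      simpa using this
    rw [hmoeb]
    split_ifs with h
    · subst h; simp
    · ring
  rw [Finset.sum_congr rfl inner, Finset.sum_ite_eq' (Finset.Icc 1 N) 1 (fun _ => Real.log x)]
  simp [hN1]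

open Classical in
private lemma mertens_aux_pointwise (x t : ℝ) (hx : 1 ≤ x) (ht1 : 1 ≤ t) (ht2 : t ≤ x) :
    mertens t * (⌊x / t⌋ : ℝ) / t
      = ∑ k ∈ Finset.Icc 1 ⌊x⌋₊, ∑ m ∈ Finset.Icc 1 ⌊x⌋₊,
          (if (k:ℝ) ≤ t ∧ (m:ℝ) * t ≤ x then (ArithmeticFunction.moebius k : ℝ) / t else 0) := by
  have ht0 : (0:ℝ) < t := by linarith
  have hA : mertens t = ∑ k ∈ Finset.Icc 1 ⌊x⌋₊,
      (if (k:ℝ) ≤ t then (ArithmeticFunction.moebius k : ℝ) else 0) := by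
    rw [mertens, ← Finset.sum_filter]
    congr 1
    ext k
    simp only [Finset.mem_filter, Finset.mem_Icc]
    constructor
    · rintro ⟨h1, h2⟩
      have hkt : (k:ℝ) ≤ t :=
        le_trans (by exact_mod_cast h2 : (k:ℝ) ≤ (⌊t⌋₊:ℝ)) (Nat.floor_le (by linarith))
      exact ⟨⟨h1, h2.trans (Nat.floor_mono ht2)⟩, hkt⟩
    · rintro ⟨⟨h1, _⟩, h3⟩
      exact ⟨h1, Nat.le_floor h3⟩
  have hB : ((⌊x / t⌋ : ℤ) : ℝ) = ∑ m ∈ Finset.Icc 1 ⌊x⌋₊,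
      (if (m:ℝ) * t ≤ x then (1:ℝ) else 0) := by
    have hxt0 : (0:ℝ) ≤ x / t := by positivity
    rw [← natCast_floor_eq_intCast_floor hxt0, ← Finset.sum_filter]
    have : Finset.filter (fun m : ℕ => (m:ℝ) * t ≤ x) (Finset.Icc 1 ⌊x⌋₊)
        = Finset.Icc 1 ⌊x/t⌋₊ := by
      ext m
      simp only [Finset.mem_filter, Finset.mem_Icc]
      constructor
      · rintro ⟨⟨h1, _⟩, h3⟩
        exact ⟨h1, Nat.le_floor ((le_div_iff₀ ht0).2 h3)⟩
      · rintro ⟨h1, h2⟩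
        have hm : (m:ℝ) ≤ x / t := le_trans (Nat.cast_le.2 h2) (Nat.floor_le hxt0)
        refine ⟨⟨h1, h2.trans (Nat.floor_mono ?_)⟩, (le_div_iff₀ ht0).1 hm⟩
        exact div_le_self (by linarith) ht1
    rw [this]
    simp [Nat.card_Icc]
  rw [hA, hB, div_eq_mul_inv, Finset.sum_mul_sum, Finset.sum_mul]
  refine Finset.sum_congr rfl fun k _ => ?_
  rw [Finset.sum_mul]
  refine Finset.sum_congr rfl fun m _ => ?_
  split_ifs with h1 h2 h3 <;>
    simp_all [div_eq_mul_inv] <;> tauto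

set_option maxHeartbeats 1000000 in
open Classical in
/-- For every real `x ≥ 1`, `log x = ∫_1^x M(t) ⌊x/t⌋ t⁻¹ dt`. -/
theorem log_eq_integral_mertens_floor (x : ℝ) (hx : 1 ≤ x) :
    Real.log x = ∫ t in (1:ℝ)..x, mertens t * (⌊x / t⌋ : ℝ) / t := by
  have hEq : Set.EqOn (fun t => mertens t * (⌊x / t⌋ : ℝ) / t)
      (fun t => ∑ k ∈ Finset.Icc 1 ⌊x⌋₊, ∑ m ∈ Finset.Icc 1 ⌊x⌋₊,
        (if (k:ℝ) ≤ t ∧ (m:ℝ) * t ≤ x then (ArithmeticFunction.moebius k : ℝ) / t else 0))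
      (Set.uIcc 1 x) := by
    intro t ht
    rw [Set.uIcc_of_le hx, Set.mem_Icc] at ht
    exact mertens_aux_pointwise x t hx ht.1 ht.2
  have hxIcc : Set.uIcc (1:ℝ) x ⊆ Set.Icc 1 x := by rw [Set.uIcc_of_le hx]
  have hIntkm : ∀ k m : ℕ, m ∈ Finset.Icc 1 ⌊x⌋₊ →
      IntervalIntegrable (fun t : ℝ =>
        if (k:ℝ) ≤ t ∧ (m:ℝ) * t ≤ x then (ArithmeticFunction.moebius k : ℝ) / t else 0)
        volume 1 x := fun k m hm =>
    mertens_aux_integrable x 1 x _ hxIcc k m (Finset.mem_Icc.1 hm).1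
  have hxIcc : Set.uIcc (1:ℝ) x ⊆ Set.Icc 1 x := by rw [Set.uIcc_of_le hx]
  have hIntkm : ∀ k m : ℕ, m ∈ Finset.Icc 1 ⌊x⌋₊ →
      IntervalIntegrable (fun t : ℝ =>
        if (k:ℝ) ≤ t ∧ (m:ℝ) * t ≤ x then (ArithmeticFunction.moebius k : ℝ) / t else 0)
        volume 1 x := fun k m hm =>
    mertens_aux_integrable x 1 x _ hxIcc k m (Finset.mem_Icc.1 hm).1
  have hstep : (∫ t in (1:ℝ)..x, ∑ k ∈ Finset.Icc 1 ⌊x⌋₊, ∑ m ∈ Finset.Icc 1 ⌊x⌋₊,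
        (if (k:ℝ) ≤ t ∧ (m:ℝ) * t ≤ x then (ArithmeticFunction.moebius k : ℝ) / t else 0))
      = ∑ k ∈ Finset.Icc 1 ⌊x⌋₊, ∫ t in (1:ℝ)..x, ∑ m ∈ Finset.Icc 1 ⌊x⌋₊,
        (if (k:ℝ) ≤ t ∧ (m:ℝ) * t ≤ x then (ArithmeticFunction.moebius k : ℝ) / t else 0) :=
    by
      apply intervalIntegral.integral_finset_sum
      intro k _
      have h2 : (∑ m ∈ Finset.Icc 1 ⌊x⌋₊, fun t : ℝ =>
          (if (k:ℝ) ≤ t ∧ (m:ℝ) * t ≤ x then (ArithmeticFunction.moebius k : ℝ) / t else 0))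
          = fun t : ℝ => ∑ m ∈ Finset.Icc 1 ⌊x⌋₊,
          (if (k:ℝ) ≤ t ∧ (m:ℝ) * t ≤ x then (ArithmeticFunction.moebius k : ℝ) / t else 0) := by
        funext t; simp [Finset.sum_apply]
      exact h2 ▸ IntervalIntegrable.sum _ (fun m hm => hIntkm k m hm)
  have hinner : ∀ k ∈ Finset.Icc 1 ⌊x⌋₊,
      (∫ t in (1:ℝ)..x, ∑ m ∈ Finset.Icc 1 ⌊x⌋₊,
        (if (k:ℝ) ≤ t ∧ (m:ℝ) * t ≤ x then (ArithmeticFunction.moebius k : ℝ) / t else 0))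
      = ∑ m ∈ Finset.Icc 1 ⌊x⌋₊,
          (if (k:ℝ) * m ≤ x then (ArithmeticFunction.moebius k : ℝ) * Real.log (x / (k * m)) else 0) := by
    intro k hk
    rw [intervalIntegral.integral_finset_sum (fun m hm => hIntkm k m hm)]
    refine Finset.sum_congr rfl fun m hm => ?_
    rw [Finset.mem_Icc] at hk hm
    have hkx : (k:ℝ) ≤ x :=
      le_trans (by exact_mod_cast hk.2 : (k:ℝ) ≤ (⌊x⌋₊:ℝ)) (Nat.floor_le (by linarith))
    exact mertens_aux_value x hx _ k m hk.1 hm.1 hkx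
  rw [intervalIntegral.integral_congr hEq, hstep, Finset.sum_congr rfl hinner,
    mertens_aux_sum x hx]
end

section
/- For every complex number s with Re s > 1, one has ∫_1^∞ M(x) x^{-s-1} dx = 1/(s ζ(s)). -/
set_option maxHeartbeats 1000000

open MeasureTheory Real Filter Set

lemma mertens_eq (x : ℝ) :
    (mertens x : ℂ) = ∑ k ∈ Finset.Icc 0 ⌊x⌋₊, ((ArithmeticFunction.moebius k : ℤ) : ℂ) := by
  rw [mertens]
  push_cast
  rw [Finset.Icc_eq_cons_Ioc (Nat.zero_le _), Finset.sum_cons, ← Finset.Icc_add_one_left_eq_Ioc]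
  simp

lemma abs_mertens_le (x : ℝ) (hx : 1 ≤ x) : |mertens x| ≤ x := by
  calc |mertens x| ≤ ∑ k ∈ Finset.Icc 1 ⌊x⌋₊, |(ArithmeticFunction.moebius k : ℝ)| :=
        Finset.abs_sum_le_sum_abs _ _
    _ ≤ ∑ k ∈ Finset.Icc 1 ⌊x⌋₊, 1 := by
        refine Finset.sum_le_sum fun k _ => ?_
        have := ArithmeticFunction.abs_moebius_le_one (n := k)
        exact_mod_cast this
    _ = (⌊x⌋₊ : ℝ) := by simp [Nat.card_Icc]
    _ ≤ x := Nat.floor_le (by linarith)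

lemma mertens_measurable : Measurable mertens := by
  have : mertens = (fun n : ℕ => ∑ k ∈ Finset.Icc 1 n, (ArithmeticFunction.moebius k : ℝ)) ∘
      (Nat.floor : ℝ → ℕ) := rfl
  rw [this]
  exact measurable_from_nat.comp Nat.measurable_floor

/-- For `Re s > 1`, `∫_1^∞ M(x) x^{-s-1} dx = 1/(s ζ(s))`. -/
theorem mellin_mertens (s : ℂ) (hs : 1 < s.re) :
    ∫ x in Set.Ioi (1:ℝ), (mertens x : ℂ) * (x : ℂ) ^ (-s - 1) =
      1 / (s * riemannZeta s) := by
  have hs0 : s ≠ 0 := by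
    intro h; rw [h] at hs; simp at hs; linarith
  set f : ℝ → ℂ := fun t => (t : ℂ) ^ (-s) with hf
  set c : ℕ → ℂ := fun k => ((ArithmeticFunction.moebius k : ℤ) : ℂ) with hc
  -- derivative of f
  have hderiv : ∀ t : ℝ, 0 < t → HasDerivAt f (-s * (t : ℂ) ^ (-s - 1)) t := by
    intro t ht
    have h1 : HasDerivAt (fun z : ℂ => z ^ (-s)) (-s * (t : ℂ) ^ (-s - 1)) (t : ℝ) :=
      (Complex.hasStrictDerivAt_cpow_const
        (Complex.ofReal_mem_slitPlane.mpr ht)).hasDerivAt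
    exact h1.comp_ofReal
  have hderiv_eq : ∀ t : ℝ, 0 < t → deriv f t = -s * (t : ℂ) ^ (-s - 1) :=
    fun t ht => (hderiv t ht).deriv
  -- integrability of the target integrand on Ioi 1
  have hInt : IntegrableOn (fun x : ℝ => (mertens x : ℂ) * (x : ℂ) ^ (-s - 1)) (Ioi 1) := by
    have hmeas : AEStronglyMeasurable (fun x : ℝ => (mertens x : ℂ) * (x : ℂ) ^ (-s - 1))
        (volume.restrict (Ioi 1)) := by
      apply AEStronglyMeasurable.mul
      · exact (Complex.measurable_ofReal.comp mertens_measurable).aestronglyMeasurable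
      · apply ContinuousOn.aestronglyMeasurable _ measurableSet_Ioi
        intro x hx
        have hx0 : (0:ℝ) < x := lt_trans one_pos hx
        exact (Complex.continuousAt_ofReal_cpow_const _ _
          (Or.inr hx0.ne')).continuousWithinAt
    refine Integrable.mono' (g := fun x : ℝ => x ^ (-s.re)) ?_ hmeas ?_
    · exact integrableOn_Ioi_rpow_of_lt (by linarith) one_pos
    · filter_upwards [ae_restrict_mem measurableSet_Ioi] with x hx
      have hx1 : (1:ℝ) < x := hx
      have hx0 : (0:ℝ) < x := by linarith
      rw [norm_mul, Complex.norm_real, Real.norm_eq_abs,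
        Complex.norm_cpow_eq_rpow_re_of_pos hx0]
      have h1 : |mertens x| ≤ x := abs_mertens_le x hx1.le
      have h2 : (-s - 1).re = -s.re - 1 := by simp
      rw [h2]
      calc |mertens x| * x ^ (-s.re - 1) ≤ x * x ^ (-s.re - 1) := by
            apply mul_le_mul_of_nonneg_right h1 (rpow_nonneg hx0.le _)
        _ = x ^ (-s.re) := by
            rw [show -s.re = 1 + (-s.re - 1) by ring, Real.rpow_add hx0, Real.rpow_one]
            norm_num
  -- Abel summation identity for each b
  have habel : ∀ b : ℝ, ∑ k ∈ Finset.Icc 0 ⌊b⌋₊, f k * c k =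
      f b * (mertens b : ℂ) - ∫ t in Set.Ioc 1 b, deriv f t * (mertens t : ℂ) := by
    intro b
    have hc0 : c 0 = 0 := by simp [hc]
    have hdiff : ∀ t ∈ Set.Icc (1:ℝ) b, DifferentiableAt ℝ f t :=
      fun t ht => (hderiv t (by linarith [ht.1])).differentiableAt
    have hcont : ContinuousOn (fun t : ℝ => -s * (t : ℂ) ^ (-s - 1)) (Set.Icc 1 b) := by
      intro t ht
      have ht0 : (0:ℝ) < t := by linarith [ht.1]
      exact (continuous_const.continuousWithinAt).mul
        ((Complex.continuousAt_ofReal_cpow_const _ _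
          (Or.inr ht0.ne')).continuousWithinAt)
    have hint : IntegrableOn (deriv f) (Set.Icc 1 b) :=
      hcont.integrableOn_Icc.congr_fun
        (fun t ht => (hderiv_eq t (by linarith [ht.1])).symm) measurableSet_Icc
    have := sum_mul_eq_sub_integral_mul₀ c hc0 b hdiff hint
    simpa only [hc, ← mertens_eq] using this
  -- limit of the partial sums : L-series of μ
  have hLsum : Tendsto (fun b : ℝ => ∑ k ∈ Finset.Icc 0 ⌊b⌋₊, f k * c k) atTop
      (nhds (LSeries (fun n => ((ArithmeticFunction.moebius n : ℤ) : ℂ)) s)) := by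
    have hsummable : LSeriesSummable (fun n => ((ArithmeticFunction.moebius n : ℤ) : ℂ)) s :=
      ArithmeticFunction.LSeriesSummable_moebius_iff.mpr hs
    have hterm : ∀ k : ℕ, LSeries.term (fun n => ((ArithmeticFunction.moebius n : ℤ) : ℂ)) s k
        = f k * c k := by
      intro k
      rcases eq_or_ne k 0 with rfl | hk
      · simp [hc, LSeries.term_zero]
      · rw [LSeries.term_of_ne_zero hk]
        simp only [hf, hc]
        rw [Complex.cpow_neg, div_eq_mul_inv, mul_comm]
        norm_cast
    have h1 : Tendsto (fun n : ℕ => ∑ k ∈ Finset.range n,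
        LSeries.term (fun n => ((ArithmeticFunction.moebius n : ℤ) : ℂ)) s k) atTop
        (nhds (LSeries (fun n => ((ArithmeticFunction.moebius n : ℤ) : ℂ)) s)) :=
      hsummable.hasSum.tendsto_sum_nat
    have h2 : Tendsto (fun b : ℝ => ⌊b⌋₊ + 1) atTop atTop :=
      tendsto_atTop_mono (fun b => Nat.le_succ _) tendsto_nat_floor_atTop
    have h3 := h1.comp h2
    refine h3.congr fun b => ?_
    rw [Function.comp_apply]
    rw [show Finset.range (⌊b⌋₊ + 1) = Finset.Icc 0 ⌊b⌋₊ by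
      rw [Finset.range_eq_Ico, Finset.Ico_add_one_right_eq_Icc]]
    exact Finset.sum_congr rfl fun k _ => hterm k
  -- limit of the boundary term
  have hbd : Tendsto (fun b : ℝ => f b * (mertens b : ℂ)) atTop (nhds 0) := by
    have hb : ∀ᶠ b : ℝ in atTop, ‖f b * (mertens b : ℂ)‖ ≤ b ^ (-(s.re - 1)) := by
      filter_upwards [eventually_ge_atTop (1:ℝ)] with b hb
      have hb0 : (0:ℝ) < b := by linarith
      rw [norm_mul, Complex.norm_cpow_eq_rpow_re_of_pos hb0,
        Complex.norm_real, Real.norm_eq_abs]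
      have h1 : |mertens b| ≤ b := abs_mertens_le b hb
      calc b ^ (-s).re * |mertens b| ≤ b ^ (-s).re * b :=
            mul_le_mul_of_nonneg_left h1 (rpow_nonneg hb0.le _)
        _ = b ^ (-(s.re - 1)) := by
            rw [show (-s).re = -s.re by simp,
              show -(s.re - 1) = -s.re + 1 by ring, Real.rpow_add hb0, Real.rpow_one]
    refine squeeze_zero_norm' hb ?_
    exact tendsto_rpow_neg_atTop (by linarith)
  -- limit of the integral term
  have hIoc : ∀ b : ℝ, 1 ≤ b → (∫ t in Set.Ioc 1 b, deriv f t * (mertens t : ℂ)) =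
      -s * ∫ t in Set.Ioc 1 b, (mertens t : ℂ) * (t : ℂ) ^ (-s - 1) := by
    intro b hb
    rw [← integral_const_mul]
    refine setIntegral_congr_fun measurableSet_Ioc fun t ht => ?_
    rw [hderiv_eq t (by linarith [ht.1])]
    ring
  have hlimI : Tendsto (fun b : ℝ => ∫ t in Set.Ioc 1 b, deriv f t * (mertens t : ℂ)) atTop
      (nhds (-s * ∫ x in Set.Ioi (1:ℝ), (mertens x : ℂ) * (x : ℂ) ^ (-s - 1))) := by
    have h1 : Tendsto (fun b : ℝ => ∫ t in (1:ℝ)..b, (mertens t : ℂ) * (t : ℂ) ^ (-s - 1)) atTop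
        (nhds (∫ x in Set.Ioi (1:ℝ), (mertens x : ℂ) * (x : ℂ) ^ (-s - 1))) :=
      intervalIntegral_tendsto_integral_Ioi 1 hInt tendsto_id
    have h2 := h1.const_mul (-s)
    refine Tendsto.congr' ?_ h2
    filter_upwards [eventually_ge_atTop (1:ℝ)] with b hb
    rw [intervalIntegral.integral_of_le hb, ← hIoc b hb]
  -- combine
  have key : Tendsto (fun b : ℝ => f b * (mertens b : ℂ) -
      ∑ k ∈ Finset.Icc 0 ⌊b⌋₊, f k * c k) atTop
      (nhds (0 - LSeries (fun n => ((ArithmeticFunction.moebius n : ℤ) : ℂ)) s)) :=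
    hbd.sub hLsum
  have key2 : Tendsto (fun b : ℝ => f b * (mertens b : ℂ) -
      ∑ k ∈ Finset.Icc 0 ⌊b⌋₊, f k * c k) atTop
      (nhds (-s * ∫ x in Set.Ioi (1:ℝ), (mertens x : ℂ) * (x : ℂ) ^ (-s - 1))) := by
    refine hlimI.congr fun b => ?_
    rw [habel b]; ring
  have heq := tendsto_nhds_unique key key2
  rw [zero_sub] at heq
  have hLmu : LSeries (fun n => ((ArithmeticFunction.moebius n : ℤ) : ℂ)) s
      = 1 / riemannZeta s := by
    have h1 := ArithmeticFunction.LSeries_zeta_mul_Lseries_moebius hs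
    have h2 := ArithmeticFunction.LSeries_zeta_eq_riemannZeta hs
    have hz : riemannZeta s ≠ 0 := riemannZeta_ne_zero_of_one_lt_re hs
    rw [h2] at h1
    field_simp
    linear_combination h1
  rw [hLmu] at heq
  have hz : riemannZeta s ≠ 0 := riemannZeta_ne_zero_of_one_lt_re hs
  field_simp at heq ⊢
  linear_combination heq
end

section
/- For every complex number s with Re s > 1, one has ∫_1^∞ (x · g(x)) x^{-s-1} dx = 1/((s-1) ζ(s)). -/
open MeasureTheory Real Filter Set

/-- `g(x) = ∑_{1 ≤ k ≤ x} μ(k)/k`. -/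
noncomputable def gFn (x : ℝ) : ℝ :=
  ∑ k ∈ Finset.Icc 1 ⌊x⌋₊, (ArithmeticFunction.moebius k : ℝ) / k

/-- For `Re s > 1`, `∫_1^∞ (x g(x)) x^{-s-1} dx = 1/((s-1) ζ(s))`. -/
theorem mellin_g (s : ℂ) (hs : 1 < s.re) :
    ∫ x in Set.Ioi (1:ℝ), ((x * gFn x : ℝ) : ℂ) * (x : ℂ) ^ (-s - 1) =
      1 / ((s - 1) * riemannZeta s) := by
  have hσ : (1:ℝ) < s.re := hs
  have hres : (-s).re < -1 := by simpa using (neg_lt_neg hσ)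
  set c : ℕ → ℂ := fun k => (ArithmeticFunction.moebius k : ℂ) / k with hc
  have hc0 : c 0 = 0 := by simp [hc]
  set F : ℕ → ℝ → ℂ :=
    fun k x => Set.indicator (Set.Ici (k:ℝ)) (fun x => c k * (x:ℂ) ^ (-s)) x with hF
  -- pointwise identity
  have hpt : ∀ x ∈ Set.Ioi (1:ℝ),
      ((x * gFn x : ℝ) : ℂ) * (x : ℂ) ^ (-s - 1) = ∑' k, F k x := by
    intro x hx
    have hx1 : (1:ℝ) < x := hx
    have hx0 : (0:ℝ) < x := lt_trans one_pos hx1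
    have hxne : (x:ℂ) ≠ 0 := by exact_mod_cast ne_of_gt hx0
    have htsum : ∑' k, F k x = ∑ k ∈ Finset.Icc 1 ⌊x⌋₊, c k * (x:ℂ) ^ (-s) := by
      rw [tsum_eq_sum (s := Finset.Icc 1 ⌊x⌋₊) ?h0]
      case h0 =>
        intro k hk
        rcases Nat.eq_zero_or_pos k with rfl | hk1
        · simp [hF, hc0]
        · have : ¬ (k:ℝ) ≤ x := by
            intro h
            exact hk (Finset.mem_Icc.mpr ⟨hk1, Nat.le_floor h⟩)
          simp [hF, Set.indicator_of_notMem, this]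
      refine Finset.sum_congr rfl fun k hk => ?_
      have hkx : (k:ℝ) ≤ x :=
        le_trans (Nat.cast_le.mpr (Finset.mem_Icc.mp hk).2) (Nat.floor_le hx0.le)
      simp [hF, Set.indicator_of_mem, hkx]
    rw [htsum, ← Finset.sum_mul]
    have hg : ((gFn x : ℝ) : ℂ) = ∑ k ∈ Finset.Icc 1 ⌊x⌋₊, c k := by
      simp [gFn, hc]
    rw [← hg]
    have hxp : (x:ℂ) * (x:ℂ) ^ (-s - 1) = (x:ℂ) ^ (-s) := by
      rw [Complex.cpow_sub _ _ hxne, Complex.cpow_one]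
      field_simp
    push_cast
    rw [mul_comm ((x:ℂ)) ((gFn x : ℝ):ℂ), mul_assoc, hxp]
  -- integrability of each piece
  have hint : ∀ k : ℕ, Integrable (F k) (volume.restrict (Set.Ioi (1:ℝ))) := by
    intro k
    rw [hF]
    rw [integrable_indicator_iff measurableSet_Ici]
    have h1 : IntegrableOn (fun x : ℝ => c k * (x:ℂ) ^ (-s)) (Set.Ioi (1:ℝ)) :=
      (integrableOn_Ioi_cpow_of_lt hres one_pos).const_mul _
    exact h1.integrableOn
  have hσ1 : (0:ℝ) < s.re - 1 := by linarith
  -- bound on the norm integrals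
  have hbound : ∀ k : ℕ,
      (∫ x in Set.Ioi (1:ℝ), ‖F k x‖) ≤ (s.re - 1)⁻¹ * (k:ℝ) ^ (-s.re) := by
    intro k
    rcases Nat.eq_zero_or_pos k with rfl | hk1
    · have : F 0 = fun _ => 0 := by
        funext x; simp [hF, hc0]
      rw [this]
      simp
      positivity
    · have hk0 : (0:ℝ) < k := by exact_mod_cast hk1
      have hintk : Integrable (fun x => ‖F k x‖) (volume : Measure ℝ) := by
        apply Integrable.norm
        rw [hF, integrable_indicator_iff measurableSet_Ici]
        rw [IntegrableOn, Measure.restrict_congr_set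
          (Ioi_ae_eq_Ici (a := (k:ℝ))).symm]
        exact (integrableOn_Ioi_cpow_of_lt hres hk0).const_mul _
      have step1 : (∫ x in Set.Ioi (1:ℝ), ‖F k x‖) ≤ ∫ x, ‖F k x‖ :=
        setIntegral_le_integral hintk (Filter.Eventually.of_forall fun x => norm_nonneg _)
      have step2 : (∫ x, ‖F k x‖) = ‖c k‖ * (-(k:ℝ) ^ (-s.re + 1) / (-s.re + 1)) := by
        have : (fun x => ‖F k x‖) =
            Set.indicator (Set.Ici (k:ℝ)) (fun x => ‖c k * (x:ℂ) ^ (-s)‖) := by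
          funext x
          rw [hF, norm_indicator_eq_indicator_norm]
        rw [this, integral_indicator measurableSet_Ici,
          Measure.restrict_congr_set (Ioi_ae_eq_Ici (a := (k:ℝ))).symm]
        rw [setIntegral_congr_fun measurableSet_Ioi
          (g := fun x : ℝ => ‖c k‖ * x ^ (-s.re)) ?heq]
        case heq =>
          intro x hx
          have hx0 : (0:ℝ) < x := lt_of_lt_of_le hk0 (le_of_lt hx)
          show ‖c k * (x:ℂ) ^ (-s)‖ = ‖c k‖ * x ^ (-s.re)
          rw [norm_mul,
            Complex.norm_cpow_eq_rpow_re_of_pos hx0]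
          simp
        rw [integral_const_mul, integral_Ioi_rpow_of_lt (by linarith) hk0]
      have hck : ‖c k‖ ≤ 1 / (k:ℝ) := by
        rw [hc]
        simp only [norm_div, Complex.norm_intCast, Complex.norm_natCast]
        gcongr
        exact_mod_cast ArithmeticFunction.abs_moebius_le_one
      have harith : -((k:ℝ) ^ (-s.re+1)) / (-s.re+1) = (k:ℝ) ^ (-s.re) * k / (s.re - 1) := by
        rw [Real.rpow_add hk0, Real.rpow_one,
          div_eq_div_iff (ne_of_lt (by linarith)) (ne_of_gt hσ1)]
        ring
      calc (∫ x in Set.Ioi (1:ℝ), ‖F k x‖)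
          ≤ ‖c k‖ * (-(k:ℝ) ^ (-s.re + 1) / (-s.re + 1)) := step2 ▸ step1
        _ = ‖c k‖ * ((k:ℝ) ^ (-s.re) * k / (s.re - 1)) := by rw [harith]
        _ ≤ (1/(k:ℝ)) * ((k:ℝ) ^ (-s.re) * k / (s.re - 1)) := by
            apply mul_le_mul_of_nonneg_right hck (by positivity)
        _ = (s.re - 1)⁻¹ * (k:ℝ) ^ (-s.re) := by
            field_simp
  have hsum : Summable fun k : ℕ => ∫ x in Set.Ioi (1:ℝ), ‖F k x‖ := by
    refine Summable.of_nonneg_of_le (fun k => integral_nonneg fun x => norm_nonneg _)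
      hbound ?_
    exact (Real.summable_nat_rpow.mpr (by linarith)).mul_left _
  -- swap integral and sum
  rw [setIntegral_congr_fun measurableSet_Ioi hpt,
    ← MeasureTheory.integral_tsum_of_summable_integral_norm hint hsum]
  -- compute each integral
  have hIk : ∀ k : ℕ,
      (∫ x in Set.Ioi (1:ℝ), F k x) = c k * (-(k:ℂ) ^ (-s + 1) / (-s + 1)) := by
    intro k
    rcases Nat.eq_zero_or_pos k with rfl | hk1
    · have : F 0 = fun _ => 0 := by funext x; simp [hF, hc0]
      rw [this]
      simp [hc0]
    · have hk0 : (0:ℝ) < k := by exact_mod_cast hk1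
      have hk1' : (1:ℝ) ≤ k := by exact_mod_cast hk1
      rw [hF]
      rw [integral_indicator measurableSet_Ici,
        Measure.restrict_restrict measurableSet_Ici]
      have hae : (Set.Ici (k:ℝ) ∩ Set.Ioi 1 : Set ℝ) =ᵐ[volume] Set.Ioi (k:ℝ) := by
        have h1 : (Set.Ici (k:ℝ) : Set ℝ) =ᵐ[volume] Set.Ioi (k:ℝ) :=
          (MeasureTheory.Ioi_ae_eq_Ici (a := (k:ℝ))).symm
        exact (h1.inter (Filter.EventuallyEq.rfl (f := (Set.Ioi (1:ℝ) : Set ℝ)))).trans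
          (Filter.EventuallyEq.of_eq (Set.inter_eq_left.mpr (Set.Ioi_subset_Ioi hk1')))
      rw [Measure.restrict_congr_set hae, integral_const_mul,
        integral_Ioi_cpow_of_lt hres hk0]
      norm_cast
  rw [tsum_congr hIk]
  -- evaluate the sum
  have hterm : ∀ k : ℕ, c k * (-(k:ℂ) ^ (-s + 1) / (-s + 1)) =
      LSeries.term (fun n => (ArithmeticFunction.moebius n : ℂ)) s k * (s - 1)⁻¹ := by
    intro k
    rcases Nat.eq_zero_or_pos k with rfl | hk1
    · simp [hc0, LSeries.term]
    · have hkne : (k:ℂ) ≠ 0 := Nat.cast_ne_zero.mpr hk1.ne'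
      rw [LSeries.term_of_ne_zero hk1.ne']
      rw [hc, Complex.cpow_add _ _ hkne, Complex.cpow_one, Complex.cpow_neg]
      have hks : (k:ℂ) ^ s ≠ 0 := by
        intro h
        exact hkne (Complex.cpow_eq_zero_iff _ _ |>.mp h).1
      have hs1 : s - 1 ≠ 0 := by
        intro h
        have : s = 1 := by linear_combination h
        rw [this] at hs
        simp at hs
      have hs1' : -s + 1 ≠ 0 := by
        intro h
        exact hs1 (by linear_combination -h)
      have hs1'' : (1:ℂ) - s ≠ 0 := by
        intro h
        exact hs1 (by linear_combination -h)
      field_simp [hkne, hks, hs1, hs1'']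
      ring
  rw [tsum_congr hterm, tsum_mul_right]
  have hL : LSeries (fun n => (ArithmeticFunction.moebius n : ℂ)) s =
      (riemannZeta s)⁻¹ := by
    have h2 := ArithmeticFunction.LSeries_zeta_mul_Lseries_moebius hs
    rw [ArithmeticFunction.LSeries_zeta_eq_riemannZeta hs] at h2
    exact eq_inv_of_mul_eq_one_right h2
  rw [show (∑' k, LSeries.term (fun n => (ArithmeticFunction.moebius n : ℂ)) s k) =
    LSeries (fun n => (ArithmeticFunction.moebius n : ℂ)) s from rfl, hL]
  rw [one_div, mul_inv, mul_comm]
end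

section
/- Let 1 < p < ∞ and q = p/(p-1). For every complex number s with Re s > 2/q, one has ∫_1^∞ H_p(x) x^{-s-1} dx = 1/(s (s + 2/p - 1) ζ(s + 2/p - 1)). -/
open MeasureTheory Real Filter Set

/-- `H_p(x) = ∫_1^x M(t) t^{-2/p} dt`. -/
noncomputable def Hfn (p : ℝ) (x : ℝ) : ℝ :=
  ∫ t in (1:ℝ)..x, mertens t * t ^ (-(2 / p))

lemma meas_cpow (s : ℂ) : Measurable (fun x : ℝ => (x:ℂ) ^ s) := by
  have : (fun x : ℝ => (x:ℂ) ^ s) = fun x : ℝ =>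
      if (x:ℂ) = 0 then (if s = 0 then 1 else 0) else Complex.exp (Complex.log x * s) := by
    funext x; rw [Complex.cpow_def]
  rw [this]
  exact Measurable.ite (by simp [Complex.ofReal_eq_zero])
    measurable_const ((Complex.measurable_ofReal.clog.mul measurable_const).cexp)

lemma abs_mertens_le_s6 {t : ℝ} (ht : 0 ≤ t) : |mertens t| ≤ t := by
  refine le_trans (Finset.abs_sum_le_sum_abs _ _) ?_
  have h1 : ∀ k ∈ Finset.Icc 1 ⌊t⌋₊, |((ArithmeticFunction.moebius k : ℤ) : ℝ)| ≤ 1 := by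
    intro k _
    exact_mod_cast ArithmeticFunction.abs_moebius_le_one (n := k)
  refine le_trans (Finset.sum_le_sum h1) ?_
  simp only [Finset.sum_const, nsmul_eq_mul, mul_one, Nat.card_Icc]
  calc ((⌊t⌋₊ + 1 - 1 : ℕ) : ℝ) = (⌊t⌋₊ : ℝ) := by simp
  _ ≤ t := Nat.floor_le ht

lemma aux_ae_eq {c : ℝ} (hc : 1 ≤ c) : (Ioi (1:ℝ) ∩ Ici c : Set ℝ) =ᵐ[volume] Ioi c := by
  rw [Filter.eventuallyEq_set]
  have : ∀ᵐ x : ℝ, x ≠ c := by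
    refine ae_iff.mpr ?_
    simpa using measure_singleton c
  filter_upwards [this] with x hx
  constructor
  · rintro ⟨_, h2⟩
    exact lt_of_le_of_ne h2 (Ne.symm hx)
  · intro h
    exact ⟨lt_of_le_of_lt hc h, mem_Ici.mpr (le_of_lt h)⟩

lemma integral_Ioi_cpow' {w : ℂ} (hw : 0 < w.re) {c : ℝ} (hc : 1 ≤ c) :
    (∫ x in Ioi (1:ℝ), Set.indicator (Ici c) (fun x : ℝ => (x:ℂ) ^ (-w-1)) x)
      = (c:ℂ) ^ (-w) / w := by
  rw [integral_indicator measurableSet_Ici, Measure.restrict_restrict measurableSet_Ici,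
    Set.inter_comm, setIntegral_congr_set (aux_ae_eq hc),
    integral_Ioi_cpow_of_lt (by simp; linarith) (by linarith : (0:ℝ) < c)]
  have : -w - 1 + 1 = -w := by ring
  rw [this, neg_div, div_neg, neg_neg]

local notation "μᶠ" => ArithmeticFunction.moebius

lemma integral_Ioi_rpow' {σ : ℝ} (hσ : 0 < σ) {c : ℝ} (hc : 1 ≤ c) :
    (∫ x in Ioi (1:ℝ), Set.indicator (Ici c) (fun x : ℝ => x ^ (-σ-1)) x)
      = c ^ (-σ) / σ := by
  rw [integral_indicator measurableSet_Ici, Measure.restrict_restrict measurableSet_Ici,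
    Set.inter_comm, setIntegral_congr_set (aux_ae_eq hc),
    integral_Ioi_rpow_of_lt (by linarith) (by linarith : (0:ℝ) < c)]
  have : -σ - 1 + 1 = -σ := by ring
  rw [this, neg_div, div_neg, neg_neg]

lemma integral_mertens_cpow {w : ℂ} (hw : 1 < w.re) :
    ∫ t in Ioi (1:ℝ), (mertens t : ℂ) * (t:ℂ) ^ (-w-1) = 1 / (w * riemannZeta w) := by
  have h0 : (0:ℝ) < w.re := by linarith
  have hre : (-w-1).re < -1 := by simp; linarith
  set F : ℕ → ℝ → ℂ := fun n t =>
    Set.indicator (Ici (n:ℝ)) (fun t : ℝ => ((μᶠ n : ℤ) : ℂ) * (t:ℂ) ^ (-w-1)) t with hF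
  have hInt : ∀ n, Integrable (F n) (volume.restrict (Ioi 1)) := fun n =>
    (((integrableOn_Ioi_cpow_of_lt hre zero_lt_one).const_mul _)).indicator measurableSet_Ici
  -- value of each integral
  have hvals : ∀ n : ℕ, (∫ t in Ioi (1:ℝ), F n t)
      = LSeries.term (fun k => ((μᶠ k : ℤ) : ℂ)) w n / w := by
    intro n
    rcases Nat.eq_zero_or_pos n with rfl | hn
    · have : F 0 = fun _ => 0 := by
        funext t
        simp [hF, Set.indicator_apply]
      rw [this]
      simp [LSeries.term_zero]
    · have h1n : (1:ℝ) ≤ (n:ℝ) := by exact_mod_cast hn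
      have : ∀ t : ℝ, F n t = ((μᶠ n : ℤ) : ℂ) *
          Set.indicator (Ici (n:ℝ)) (fun t : ℝ => (t:ℂ) ^ (-w-1)) t := by
        intro t
        simp [hF, Set.indicator_apply, mul_ite, mul_zero]
      simp_rw [this]
      rw [integral_const_mul, integral_Ioi_cpow' h0 h1n,
        LSeries.term_of_ne_zero hn.ne' _ w, Complex.cpow_neg]
      push_cast
      ring
  -- summability of integrals of norms
  have hsum : Summable (fun n : ℕ => ∫ t in Ioi (1:ℝ), ‖F n t‖) := by
    have hb : Summable (fun n : ℕ => (1 / w.re) * ((n:ℝ) ^ (-w.re))) :=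
      (Real.summable_nat_rpow.mpr (by linarith)).mul_left _
    refine Summable.of_nonneg_of_le (fun n => integral_nonneg fun t => norm_nonneg _)
      (fun n => ?_) hb
    rcases Nat.eq_zero_or_pos n with rfl | hn
    · have : F 0 = fun _ => 0 := by
        funext t; simp [hF, Set.indicator_apply]
      rw [this]
      simp [Real.zero_rpow (by linarith : -w.re ≠ 0)]
    · have h1n : (1:ℝ) ≤ (n:ℝ) := by exact_mod_cast hn
      have heq : ∀ t ∈ Ioi (1:ℝ), ‖F n t‖ =
          |((μᶠ n : ℤ) : ℝ)| * Set.indicator (Ici (n:ℝ)) (fun t : ℝ => t ^ (-w.re-1)) t := by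
        intro t ht
        have ht0 : (0:ℝ) < t := lt_trans zero_lt_one ht
        by_cases h : (n:ℝ) ≤ t
        · simp only [hF, Set.indicator_of_mem (mem_Ici.mpr h)]
          rw [norm_mul, Complex.norm_cpow_eq_rpow_re_of_pos ht0]
          simp [Complex.norm_intCast]
        · simp [hF, Set.indicator_of_notMem (fun hc => h (mem_Ici.mp hc))]
      rw [setIntegral_congr_fun measurableSet_Ioi heq, integral_const_mul,
        integral_Ioi_rpow' h0 h1n]
      have habs : |((μᶠ n : ℤ) : ℝ)| ≤ 1 := by
        exact_mod_cast ArithmeticFunction.abs_moebius_le_one (n := n)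
      have hnn : (0:ℝ) ≤ (n:ℝ) ^ (-w.re) / w.re :=
        div_nonneg (Real.rpow_nonneg (by positivity) _) h0.le
      calc |((μᶠ n : ℤ) : ℝ)| * ((n:ℝ) ^ (-w.re) / w.re)
          ≤ 1 * ((n:ℝ) ^ (-w.re) / w.re) := by gcongr
        _ = 1 / w.re * (n:ℝ) ^ (-w.re) := by ring
  -- pointwise tsum identity
  have htsum : ∀ t ∈ Ioi (1:ℝ), (∑' n, F n t) = (mertens t : ℂ) * (t:ℂ) ^ (-w-1) := by
    intro t ht
    have ht0 : (0:ℝ) ≤ t := le_of_lt (lt_trans zero_lt_one ht)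
    have h1 : (∑' n, F n t) = ∑ n ∈ Finset.range (⌊t⌋₊ + 1), F n t := by
      refine tsum_eq_sum ?_
      intro n hn
      have hn' : ⌊t⌋₊ < n := by
        by_contra h
        exact hn (Finset.mem_range.mpr (by omega))
      have : t < (n:ℝ) := lt_of_lt_of_le (Nat.lt_floor_add_one t)
        (by exact_mod_cast Nat.succ_le_of_lt hn')
      simp [hF, Set.indicator_of_notMem (fun hc => absurd (mem_Ici.mp hc) (not_le.mpr this))]
    rw [h1]
    have h2 : ∀ n ∈ Finset.range (⌊t⌋₊ + 1), F n t = ((μᶠ n : ℤ) : ℂ) * (t:ℂ) ^ (-w-1) := by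
      intro n hn
      have hn' : n ≤ ⌊t⌋₊ := Nat.lt_succ_iff.mp (Finset.mem_range.mp hn)
      have hnt : (n:ℝ) ≤ t := le_trans (Nat.cast_le.mpr hn') (Nat.floor_le ht0)
      simp only [hF]
      exact Set.indicator_of_mem (mem_Ici.mpr hnt) _
    rw [Finset.sum_congr rfl h2, ← Finset.sum_mul]
    congr 1
    have : ∑ n ∈ Finset.range (⌊t⌋₊ + 1), ((μᶠ n : ℤ) : ℂ)
        = ∑ n ∈ Finset.Icc 1 ⌊t⌋₊, ((μᶠ n : ℤ) : ℂ) := by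
      refine (Finset.sum_subset ?_ ?_).symm
      · intro k hk
        simp only [Finset.mem_Icc] at hk
        exact Finset.mem_range.mpr (by omega)
      · intro k hk hk'
        simp only [Finset.mem_Icc, Finset.mem_range, not_and, not_le] at hk hk'
        have : k = 0 := by omega
        simp [this]
    rw [this, mertens]
    push_cast
    rfl
  -- put it together
  have key := (hasSum_integral_of_summable_integral_norm hInt hsum).tsum_eq
  have h2 : (∫ t in Ioi (1:ℝ), (mertens t : ℂ) * (t:ℂ) ^ (-w-1))
      = ∑' n, ∫ t in Ioi (1:ℝ), F n t := by
    rw [key]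
    exact setIntegral_congr_fun measurableSet_Ioi (fun t ht => (htsum t ht).symm)
  rw [h2]
  simp_rw [hvals]
  rw [tsum_div_const]
  have hLmu : LSeries (fun k => ((μᶠ k : ℤ) : ℂ)) w = (riemannZeta w)⁻¹ := by
    have h1 := ArithmeticFunction.LSeries_zeta_mul_Lseries_moebius hw
    rw [ArithmeticFunction.LSeries_zeta_eq_riemannZeta hw] at h1
    exact eq_inv_of_mul_eq_one_right h1
  rw [show (∑' n, LSeries.term (fun k => ((μᶠ k : ℤ) : ℂ)) w n)
      = LSeries (fun k => ((μᶠ k : ℤ) : ℂ)) w from rfl, hLmu]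
  rw [div_eq_mul_inv, one_div, mul_inv, mul_comm]

lemma meas_rpow (c : ℝ) : Measurable (fun x : ℝ => x ^ c) := by
  have : (fun x : ℝ => x ^ c) = fun x : ℝ => ((x:ℂ) ^ (c:ℂ)).re := by
    funext x; rfl
  rw [this]
  exact Complex.measurable_re.comp (meas_cpow c)

/-- For `1 < p < ∞`, `q = p/(p-1)`, and `Re s > 2/q`,
`∫_1^∞ H_p(x) x^{-s-1} dx = 1/(s (s + 2/p - 1) ζ(s + 2/p - 1))`. -/
theorem mellin_H (p q : ℝ) (hp : 1 < p) (hq : q = p / (p - 1))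
    (s : ℂ) (hs : 2 / q < s.re) :
    ∫ x in Set.Ioi (1:ℝ), (Hfn p x : ℂ) * (x : ℂ) ^ (-s - 1) =
      1 / (s * (s + (2 / p : ℝ) - 1) * riemannZeta (s + (2 / p : ℝ) - 1)) := by
  have hp0 : (0:ℝ) < p := lt_trans zero_lt_one hp
  set a : ℝ := 2 / p with ha_def
  have ha : 0 < a := by positivity
  have ha2 : a < 2 := by
    rw [ha_def, div_lt_iff₀ hp0]; nlinarith
  have hsre : 2 - a < s.re := by
    have hq' : 2 / q = 2 - a := by
      rw [hq, ha_def]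
      field_simp
    linarith [hq' ▸ hs]
  have h0s : 0 < s.re := by linarith
  have hs0 : s ≠ 0 := fun h => by simp [h] at h0s
  set w : ℂ := s + (a:ℂ) - 1 with hw_def
  have hwre : w.re = s.re + a - 1 := by simp [hw_def]
  have hw : 1 < w.re := by rw [hwre]; linarith
  set g : ℝ → ℝ := fun t => mertens t * t ^ (-a) with hg_def
  set f : ℝ → ℝ → ℂ := fun x t => (if t ≤ x then (g t : ℂ) else 0) * (x:ℂ) ^ (-s-1) with hf_def
  set μ1 : Measure ℝ := volume.restrict (Ioi (1:ℝ)) with hμ1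
  have hmeasg : Measurable g := mertens_measurable.mul (meas_rpow (-a))
  have hmeasf : Measurable (Function.uncurry f) := by
    have h1 : Measurable (fun q : ℝ × ℝ => ((g q.2 : ℝ) : ℂ)) :=
      Complex.measurable_ofReal.comp (hmeasg.comp measurable_snd)
    have h2 : Measurable (fun q : ℝ × ℝ => ((q.1:ℂ)) ^ (-s-1)) :=
      (meas_cpow (-s-1)).comp measurable_fst
    exact (Measurable.ite (measurableSet_le measurable_snd measurable_fst) h1
      measurable_const).mul h2
  have hf_asm : AEStronglyMeasurable (Function.uncurry f) (μ1.prod μ1) :=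
    hmeasf.aestronglyMeasurable
  have hgbound : ∀ t:ℝ, 1 < t → |g t| ≤ t ^ ((1:ℝ)-a) := by
    intro t ht
    have ht0 : (0:ℝ) < t := lt_trans zero_lt_one ht
    rw [hg_def]
    dsimp only
    rw [abs_mul, abs_of_nonneg (Real.rpow_nonneg ht0.le _)]
    calc |mertens t| * t ^ (-a) ≤ t * t ^ (-a) := by
          gcongr
          exact abs_mertens_le_s6 ht0.le
      _ = t ^ ((1:ℝ)-a) := by
          rw [show (1:ℝ)-a = 1 + (-a) by ring, Real.rpow_add ht0, Real.rpow_one]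
  have h_slice : ∀ x : ℝ, 1 < x → Integrable (fun t => f x t) μ1 := by
    intro x hx
    have hx0 : (0:ℝ) < x := lt_trans zero_lt_one hx
    set C : ℝ := x * ‖(x:ℂ) ^ (-s-1)‖ with hC
    have hCnn : 0 ≤ C := mul_nonneg hx0.le (norm_nonneg _)
    refine Integrable.mono' (g := Set.indicator (Ioc 1 x) (fun _ => C)) ?_ ?_ ?_
    · refine (integrable_indicator_iff measurableSet_Ioc).mpr ?_
      refine (integrableOn_const_iff).mpr (Or.inr ?_)
      exact lt_of_le_of_lt (Measure.restrict_apply_le _ _) measure_Ioc_lt_top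
    · refine Measurable.aestronglyMeasurable ?_
      exact ((Measurable.ite measurableSet_Iic
        (Complex.measurable_ofReal.comp hmeasg) measurable_const).mul_const _)
    · filter_upwards [ae_restrict_mem measurableSet_Ioi] with t ht
      have ht1 : (1:ℝ) < t := ht
      have ht0 : (0:ℝ) ≤ t := le_trans zero_le_one ht1.le
      by_cases h : t ≤ x
      · have htm : t ∈ Ioc 1 x := ⟨ht1, h⟩
        rw [Set.indicator_of_mem htm]
        simp only [hf_def]
        rw [if_pos h, norm_mul, Complex.norm_real]
        have h1 : ‖g t‖ ≤ x := by
          rw [Real.norm_eq_abs, hg_def]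
          dsimp only
          rw [abs_mul, abs_of_nonneg (Real.rpow_nonneg ht0 _)]
          calc |mertens t| * t ^ (-a)
              ≤ t * 1 := mul_le_mul (abs_mertens_le_s6 ht0)
                (Real.rpow_le_one_of_one_le_of_nonpos ht1.le (by linarith))
                (Real.rpow_nonneg ht0 _) ht0
            _ ≤ x := by rw [mul_one]; exact h
        rw [hC]
        exact mul_le_mul_of_nonneg_right h1 (norm_nonneg _)
      · simp only [hf_def]
        rw [if_neg h, zero_mul, norm_zero]
        exact Set.indicator_nonneg (fun _ _ => hCnn) t
  have h_norm_int : Integrable (fun x => ∫ t, ‖f x t‖ ∂μ1) μ1 := by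
    refine Integrable.mono' (g := fun x : ℝ => (1/(2-a)) * x ^ (1 - a - s.re)) ?_ ?_ ?_
    · exact (integrableOn_Ioi_rpow_of_lt (by linarith) zero_lt_one).const_mul _
    · exact hf_asm.norm.integral_prod_right'
    · filter_upwards [ae_restrict_mem measurableSet_Ioi] with x hx
      have hx0 : (0:ℝ) < x := lt_trans zero_lt_one hx
      rw [Real.norm_of_nonneg (integral_nonneg fun t => norm_nonneg _)]
      set K : ℝ := x ^ (-s.re - 1) with hK_def
      have hKnn : 0 ≤ K := Real.rpow_nonneg hx0.le _
      have hKval : ‖(x:ℂ) ^ (-s-1)‖ = K := by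
        rw [hK_def, Complex.norm_cpow_eq_rpow_re_of_pos hx0]
        norm_num
      have hmaj : ∀ t, t ∈ Ioi (1:ℝ) →
          ‖f x t‖ ≤ Set.indicator (Ioc 1 x) (fun t : ℝ => t ^ ((1:ℝ)-a)) t * K := by
        intro t ht
        by_cases h : t ≤ x
        · have htm : t ∈ Ioc 1 x := ⟨ht, h⟩
          rw [Set.indicator_of_mem htm]
          simp only [hf_def]
          rw [if_pos h, norm_mul, Complex.norm_real, hKval, Real.norm_eq_abs]
          exact mul_le_mul_of_nonneg_right (hgbound t ht) hKnn
        · simp only [hf_def]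
          rw [if_neg h, zero_mul, norm_zero]
          have : (0:ℝ) ≤ Set.indicator (Ioc 1 x) (fun t : ℝ => t ^ ((1:ℝ)-a)) t :=
            Set.indicator_nonneg (fun y hy => Real.rpow_nonneg
              (le_trans zero_le_one (le_of_lt hy.1)) _) t
          exact mul_nonneg this hKnn
      have hmaj_int : Integrable
          (fun t : ℝ => Set.indicator (Ioc 1 x) (fun t : ℝ => t ^ ((1:ℝ)-a)) t * K) μ1 := by
        refine Integrable.mul_const ?_ _
        refine (integrable_indicator_iff measurableSet_Ioc).mpr ?_
        rw [hμ1, IntegrableOn, Measure.restrict_restrict measurableSet_Ioc,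
          Set.inter_eq_left.mpr Set.Ioc_subset_Ioi_self]
        exact (intervalIntegral.intervalIntegrable_rpow' (by linarith)).1
      calc (∫ t, ‖f x t‖ ∂μ1)
          ≤ ∫ t, Set.indicator (Ioc 1 x) (fun t : ℝ => t ^ ((1:ℝ)-a)) t * K ∂μ1 := by
            refine integral_mono_of_nonneg (Eventually.of_forall fun t => norm_nonneg _)
              hmaj_int ?_
            filter_upwards [ae_restrict_mem measurableSet_Ioi] with t ht using hmaj t ht
        _ = (∫ t in Ioc 1 x, t ^ ((1:ℝ)-a)) * K := by
            rw [integral_mul_const, integral_indicator measurableSet_Ioc, hμ1,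
              Measure.restrict_restrict measurableSet_Ioc,
              Set.inter_eq_left.mpr Set.Ioc_subset_Ioi_self]
        _ = ((x ^ ((2:ℝ)-a) - 1)/(2-a)) * K := by
            rw [← intervalIntegral.integral_of_le (le_of_lt hx),
              integral_rpow (Or.inl (by linarith)), Real.one_rpow,
              show (1:ℝ)-a+1 = 2-a by ring]
        _ ≤ (x ^ ((2:ℝ)-a)/(2-a)) * K := by
            gcongr
            · linarith
        _ = (1/(2-a)) * x ^ (1 - a - s.re) := by
            rw [hK_def, show (1:ℝ) - a - s.re = (2-a) + (-s.re-1) by ring,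
              Real.rpow_add hx0]
            ring
  have hint : Integrable (Function.uncurry f) (μ1.prod μ1) := by
    refine (integrable_prod_iff hf_asm).mpr ⟨?_, h_norm_int⟩
    filter_upwards [ae_restrict_mem measurableSet_Ioi] with x hx using h_slice x hx
  have step1 : (∫ x in Ioi (1:ℝ), (Hfn p x : ℂ) * (x:ℂ) ^ (-s-1))
      = ∫ x in Ioi (1:ℝ), ∫ t in Ioi (1:ℝ), f x t := by
    refine setIntegral_congr_fun measurableSet_Ioi (fun x hx => ?_)
    have hx : (1:ℝ) < x := hx
    have e1 : (fun t : ℝ => (if t ≤ x then ((g t : ℝ) : ℂ) else 0))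
        = Set.indicator (Iic x) (fun t : ℝ => ((g t : ℝ) : ℂ)) := by
      funext t; simp [Set.indicator_apply, Set.mem_Iic]
    have : (∫ t in Ioi (1:ℝ), f x t) = (Hfn p x : ℂ) * (x:ℂ) ^ (-s-1) := by
      simp only [hf_def]
      rw [integral_mul_const]
      congr 1
      rw [e1, integral_indicator measurableSet_Iic,
        Measure.restrict_restrict measurableSet_Iic, Set.inter_comm, Set.Ioi_inter_Iic]
      have hH : Hfn p x = ∫ t in Ioc 1 x, g t := by
        unfold Hfn
        rw [intervalIntegral.integral_of_le (le_of_lt hx)]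
      rw [hH]
      exact integral_ofReal
    rw [this]
  have step3 : (∫ t in Ioi (1:ℝ), ∫ x in Ioi (1:ℝ), f x t)
      = ∫ t in Ioi (1:ℝ), (1/s) * ((mertens t : ℂ) * (t:ℂ) ^ (-w-1)) := by
    refine setIntegral_congr_fun measurableSet_Ioi (fun t ht => ?_)
    have ht : (1:ℝ) < t := ht
    have ht0 : (0:ℝ) < t := lt_trans zero_lt_one ht
    have e1 : (fun x : ℝ => f x t) = fun x : ℝ =>
        ((g t : ℝ) : ℂ) * Set.indicator (Ici t) (fun x : ℝ => (x:ℂ) ^ (-s-1)) x := by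
      funext x
      by_cases h : t ≤ x
      · simp only [hf_def]
        rw [if_pos h, Set.indicator_of_mem (mem_Ici.mpr h)]
      · simp only [hf_def]
        rw [if_neg h, Set.indicator_of_notMem (fun hc => h (mem_Ici.mp hc)), zero_mul, mul_zero]
    rw [e1, integral_const_mul, integral_Ioi_cpow' h0s (le_of_lt ht)]
    have e2 : ((g t : ℝ) : ℂ) = (mertens t : ℂ) * (t:ℂ) ^ ((-a : ℝ) : ℂ) := by
      rw [hg_def]
      push_cast [Complex.ofReal_cpow ht0.le]
      rfl
    have e3 : (t:ℂ) ≠ 0 := by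
      simp only [ne_eq, Complex.ofReal_eq_zero]
      exact ht0.ne'
    have e4 : (t:ℂ) ^ ((-a : ℝ) : ℂ) * (t:ℂ) ^ (-s) = (t:ℂ) ^ (-w-1) := by
      rw [← Complex.cpow_add _ _ e3]
      congr 1
      rw [hw_def]
      push_cast
      ring
    rw [e2]
    calc (mertens t : ℂ) * (t:ℂ) ^ ((-a : ℝ) : ℂ) * ((t:ℂ) ^ (-s)/s)
        = (1/s) * ((mertens t : ℂ) * ((t:ℂ) ^ ((-a : ℝ) : ℂ) * (t:ℂ) ^ (-s))) := by ring
      _ = (1/s) * ((mertens t : ℂ) * (t:ℂ) ^ (-w-1)) := by rw [e4]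
  rw [step1, integral_integral_swap hint, step3, integral_const_mul,
    integral_mertens_cpow hw, div_mul_div_comm, one_mul, ← mul_assoc]
end

section
/- Let 1 < p < ∞. There is a constant C > 0 such that for every f ∈ L_p((0,∞)) (with respect to Lebesgue measure), the integral Tf(x) = ∫_0^∞ f(θ) ρ(θ/x) θ^{-1} dθ converges absolutely for every x > 0, and ‖Tf‖_{L_p(0,∞)} ≤ C ‖f‖_{L_p(0,∞)}. -/
open MeasureTheory Real Filter Set
open scoped ENNReal NNReal

lemma lint_ker {a x : ℝ} (ha : 0 < a) (ha1 : a < 1) (hx : 0 < x) :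
    ∫⁻ θ in Ioi (0:ℝ), ENNReal.ofReal (min x⁻¹ θ⁻¹ * θ ^ (-a)) =
      ENNReal.ofReal ((a * (1 - a))⁻¹ * x ^ (-a)) := by
  have h1a : 0 < 1 - a := by linarith
  have hne1 : (1 - a) ≠ 0 := h1a.ne'
  rw [show Ioi (0:ℝ) = Ioc 0 x ∪ Ioi x from (Ioc_union_Ioi_eq_Ioi hx.le).symm,
    lintegral_union measurableSet_Ioi (Ioc_disjoint_Ioi le_rfl)]
  have h1 : ∫⁻ θ in Ioc (0:ℝ) x, ENNReal.ofReal (min x⁻¹ θ⁻¹ * θ ^ (-a)) =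
      ENNReal.ofReal (x ^ (-a) / (1 - a)) := by
    rw [setLIntegral_congr_fun measurableSet_Ioc
      (fun θ hθ => by rw [min_eq_left (inv_anti₀ hθ.1 hθ.2)])]
    rw [← ofReal_integral_eq_lintegral_ofReal]
    · congr 1
      rw [← intervalIntegral.integral_of_le hx.le]
      rw [intervalIntegral.integral_const_mul, integral_rpow (Or.inl (by linarith))]
      rw [Real.zero_rpow (by linarith), sub_zero, ← Real.rpow_neg_one x,
        div_eq_mul_inv, ← mul_assoc, ← Real.rpow_add hx,
        show (-1) + (-a + 1) = -a by ring, div_eq_mul_inv]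
      ring_nf
    · refine Integrable.const_mul ?_ _
      exact (intervalIntegrable_iff_integrableOn_Ioc_of_le hx.le).mp
        (intervalIntegral.intervalIntegrable_rpow' (by linarith))
    · filter_upwards [ae_restrict_mem measurableSet_Ioc] with θ hθ
      have h0 : 0 < θ := hθ.1
      positivity
  have h2 : ∫⁻ θ in Ioi x, ENNReal.ofReal (min x⁻¹ θ⁻¹ * θ ^ (-a)) =
      ENNReal.ofReal (x ^ (-a) / a) := by
    rw [setLIntegral_congr_fun measurableSet_Ioi
      ((fun θ (hθ : x < θ) => by
        rw [min_eq_right (inv_anti₀ hx hθ.le),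
          show θ⁻¹ * θ ^ (-a) = θ ^ (-(a+1)) by
            rw [← Real.rpow_neg_one θ, ← Real.rpow_add (hx.trans hθ)]; ring_nf]))]
    rw [← ofReal_integral_eq_lintegral_ofReal]
    · rw [integral_Ioi_rpow_of_lt (by linarith) hx]
      congr 1
      rw [show -(a+1)+1 = -a by ring]
      field_simp
    · exact integrableOn_Ioi_rpow_of_lt (by linarith) hx
    · filter_upwards [ae_restrict_mem measurableSet_Ioi] with θ hθ
      have h0 : 0 < θ := hx.trans hθ
      positivity
  rw [h1, h2, ← ENNReal.ofReal_add (by positivity) (by positivity)]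
  congr 1
  rw [inv_mul_eq_div, div_add_div _ _ hne1 ha.ne',
    div_eq_div_iff (mul_ne_zero hne1 ha.ne') (mul_ne_zero ha.ne' hne1)]
  ring

lemma lint_ker_rpow_lt_top {q x : ℝ} (hq : 1 < q) (hx : 0 < x) :
    ∫⁻ θ in Ioi (0:ℝ), ENNReal.ofReal (min x⁻¹ θ⁻¹) ^ q < ⊤ := by
  rw [show Ioi (0:ℝ) = Ioc 0 x ∪ Ioi x from (Ioc_union_Ioi_eq_Ioi hx.le).symm,
    lintegral_union measurableSet_Ioi (Ioc_disjoint_Ioi le_rfl)]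
  refine ENNReal.add_lt_top.2 ⟨?_, ?_⟩
  · calc ∫⁻ θ in Ioc (0:ℝ) x, ENNReal.ofReal (min x⁻¹ θ⁻¹) ^ q
        ≤ ∫⁻ _ in Ioc (0:ℝ) x, ENNReal.ofReal x⁻¹ ^ q := by
          refine setLIntegral_mono' measurableSet_Ioc fun θ hθ => ?_
          exact ENNReal.rpow_le_rpow (ENNReal.ofReal_le_ofReal (min_le_left _ _))
            (by linarith)
      _ < ⊤ := by
          rw [setLIntegral_const]
          refine ENNReal.mul_lt_top ?_ (by simp [Real.volume_Ioc])
          exact (ENNReal.rpow_lt_top_of_nonneg (by linarith) ENNReal.ofReal_ne_top)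
  · have heq : ∫⁻ θ in Ioi x, ENNReal.ofReal (min x⁻¹ θ⁻¹) ^ q
        = ∫⁻ θ in Ioi x, ↑‖θ ^ (-q)‖₊ := by
      refine setLIntegral_congr_fun measurableSet_Ioi (fun θ (hθ : x < θ) => ?_)
      have h0 : 0 < θ := hx.trans hθ
      rw [min_eq_right (inv_anti₀ hx hθ.le),
        ENNReal.ofReal_rpow_of_nonneg (by positivity) (by linarith),
        ← enorm_eq_nnnorm, Real.enorm_eq_ofReal (by positivity), ← Real.rpow_neg_one θ, ← Real.rpow_mul h0.le]
      norm_num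
    rw [heq]
    exact (integrableOn_Ioi_rpow_of_lt (by linarith) hx).2

lemma fract_div_le_min {x θ : ℝ} (hx : 0 < x) (hθ : 0 < θ) :
    Int.fract (θ / x) / θ ≤ min x⁻¹ θ⁻¹ := by
  refine le_min ?_ ?_
  · rw [div_le_iff₀ hθ]
    calc Int.fract (θ / x) ≤ θ / x := by
          have h0 : (0:ℝ) ≤ ⌊θ / x⌋ := by
            exact_mod_cast Int.floor_nonneg.2 (by positivity)
          have := Int.self_sub_floor (θ / x)
          linarith [this]
      _ = x⁻¹ * θ := by field_simp
  · rw [div_le_iff₀ hθ, inv_mul_cancel₀ hθ.ne']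
    exact (Int.fract_lt_one _).le

/-- The operator `T` is bounded on `L_p(0,∞)`: there is `C > 0` such that for every
`f ∈ L_p(0,∞)`, the integral `Tf(x) = ∫_0^∞ f(θ) ρ(θ/x) θ⁻¹ dθ` converges absolutely for
every `x > 0`, and `‖Tf‖_p ≤ C ‖f‖_p`. -/
theorem T_bounded_on_Lp (p : ℝ) (hp : 1 < p) :
    ∃ C : ℝ, 0 < C ∧ ∀ f : ℝ → ℂ,
      MemLp f (ENNReal.ofReal p) (volume.restrict (Set.Ioi 0)) →
      (∀ x > (0:ℝ),
        IntegrableOn (fun θ : ℝ => f θ * ((Int.fract (θ / x) / θ : ℝ) : ℂ)) (Set.Ioi 0)) ∧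
      eLpNorm (fun x : ℝ => ∫ θ in Set.Ioi (0:ℝ), f θ * ((Int.fract (θ / x) / θ : ℝ) : ℂ))
          (ENNReal.ofReal p) (volume.restrict (Set.Ioi 0)) ≤
        ENNReal.ofReal C *
          eLpNorm f (ENNReal.ofReal p) (volume.restrict (Set.Ioi 0)) := by
  have hp0 : 0 < p := by linarith
  have hpq : p.HolderConjugate (p / (p-1)) := Real.HolderConjugate.conjExponent hp
  set q : ℝ := p / (p - 1) with hqdef
  have hq1 : 1 < q := hpq.symm.lt
  have hq0 : 0 < q := by linarith
  have hinvp : (0:ℝ) < p⁻¹ := by positivity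
  have hinvq : (0:ℝ) < q⁻¹ := by positivity
  have hinvp1 : p⁻¹ < 1 := by rw [inv_lt_one_iff₀]; right; exact hp
  have hinvq1 : q⁻¹ < 1 := by rw [inv_lt_one_iff₀]; right; exact hq1
  have hsum : p⁻¹ + q⁻¹ = 1 := hpq.inv_add_inv_eq_one
  refine ⟨p * q, by positivity, fun f hf => ?_⟩
  have hP0 : ENNReal.ofReal p ≠ 0 := by
    simp only [ne_eq, ENNReal.ofReal_eq_zero, not_le]; exact hp0
  have hPt : ENNReal.ofReal p ≠ ⊤ := ENNReal.ofReal_ne_top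
  have hPr : (ENNReal.ofReal p).toReal = p := ENNReal.toReal_ofReal hp0.le
  have hfm : AEMeasurable (fun θ => (‖f θ‖₊ : ℝ≥0∞)) (volume.restrict (Set.Ioi 0)) :=
    hf.aestronglyMeasurable.enorm
  set g : ℝ → ℝ≥0∞ := hfm.mk _ with hgdef
  have hgm : Measurable g := hfm.measurable_mk
  have hgeq : (fun θ => (‖f θ‖₊ : ℝ≥0∞)) =ᵐ[volume.restrict (Set.Ioi 0)] g := hfm.ae_eq_mk
  have hKpos : ∀ {x θ : ℝ}, 0 < x → 0 < θ → ENNReal.ofReal (min x⁻¹ θ⁻¹) ≠ 0 := by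
    intro x θ hx hθ
    simp only [ne_eq, ENNReal.ofReal_eq_zero, not_le]
    positivity
  -- pointwise bound on the integrand
  have hbound : ∀ {x θ : ℝ}, 0 < x → 0 < θ →
      (‖f θ * ((Int.fract (θ / x) / θ : ℝ) : ℂ)‖₊ : ℝ≥0∞) ≤
        (‖f θ‖₊ : ℝ≥0∞) * ENNReal.ofReal (min x⁻¹ θ⁻¹) := by
    intro x θ hx hθ
    rw [nnnorm_mul, ENNReal.coe_mul]
    refine mul_le_mul_right ?_ _
    rw [show ‖((Int.fract (θ / x) / θ : ℝ) : ℂ)‖₊ = ‖(Int.fract (θ / x) / θ : ℝ)‖₊ by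
      simp [nnnorm, Complex.norm_real]]
    rw [← enorm_eq_nnnorm, Real.enorm_eq_ofReal (div_nonneg (Int.fract_nonneg _) hθ.le)]
    exact ENNReal.ofReal_le_ofReal (fract_div_le_min hx hθ)
  -- the norm of f
  have hfnorm : eLpNorm f (ENNReal.ofReal p) (volume.restrict (Set.Ioi 0)) =
      (∫⁻ θ in Set.Ioi (0:ℝ), g θ ^ p) ^ (1/p) := by
    rw [eLpNorm_eq_lintegral_rpow_enorm_toReal hP0 hPt, hPr]
    congr 1
    refine lintegral_congr_ae (hgeq.mono fun θ h => ?_)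
    exact congrArg (· ^ p) h
  -- Part 1: integrability
  have part1 : ∀ x > (0:ℝ),
      IntegrableOn (fun θ : ℝ => f θ * ((Int.fract (θ / x) / θ : ℝ) : ℂ)) (Set.Ioi 0) := by
    intro x hx
    constructor
    · exact hf.aestronglyMeasurable.mul
        ((Complex.measurable_ofReal.comp
          ((measurable_fract.comp (measurable_id.div_const x)).div
            measurable_id)).aestronglyMeasurable)
    · show (∫⁻ θ in Set.Ioi (0:ℝ), ↑‖f θ * ((Int.fract (θ / x) / θ : ℝ) : ℂ)‖₊) < ⊤
      have hle : (∫⁻ θ in Set.Ioi (0:ℝ), ↑‖f θ * ((Int.fract (θ / x) / θ : ℝ) : ℂ)‖₊) ≤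
          (∫⁻ θ in Set.Ioi (0:ℝ), (‖f θ‖₊ : ℝ≥0∞) ^ p) ^ (1/p) *
          (∫⁻ θ in Set.Ioi (0:ℝ), ENNReal.ofReal (min x⁻¹ θ⁻¹) ^ q) ^ (1/q) := by
        calc (∫⁻ θ in Set.Ioi (0:ℝ), ↑‖f θ * ((Int.fract (θ / x) / θ : ℝ) : ℂ)‖₊)
            ≤ ∫⁻ θ in Set.Ioi (0:ℝ),
                ((fun θ => (‖f θ‖₊ : ℝ≥0∞)) * fun θ => ENNReal.ofReal (min x⁻¹ θ⁻¹)) θ := by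
              refine lintegral_mono_ae ((ae_restrict_iff' measurableSet_Ioi).2
                (ae_of_all _ fun θ hθ => ?_))
              exact hbound hx hθ
          _ ≤ _ := ENNReal.lintegral_mul_le_Lp_mul_Lq _ hpq hfm
              (Measurable.aemeasurable (by fun_prop))
      refine lt_of_le_of_lt hle (ENNReal.mul_lt_top ?_ ?_)
      · have h2 := hf.2
        rw [eLpNorm_eq_lintegral_rpow_enorm_toReal hP0 hPt, hPr] at h2
        exact h2
      · exact ENNReal.rpow_lt_top_of_nonneg (by positivity)
          (lint_ker_rpow_lt_top hq1 hx).ne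
  refine ⟨part1, ?_⟩
  -- Step C : pointwise Hoelder estimate
  have stepC : ∀ x : ℝ, 0 < x →
      (∫⁻ θ in Set.Ioi (0:ℝ), g θ * ENNReal.ofReal (min x⁻¹ θ⁻¹)) ^ p ≤
        ENNReal.ofReal ((p*q) ^ (p * q⁻¹)) * (ENNReal.ofReal (x ^ (-q⁻¹)) *
          (∫⁻ θ in Set.Ioi (0:ℝ),
            ENNReal.ofReal (min x⁻¹ θ⁻¹) * ENNReal.ofReal (θ ^ q⁻¹) * g θ ^ p)) := by
    intro x hx
    have hc : q⁻¹ * p⁻¹ * p = q⁻¹ := by rw [mul_assoc, inv_mul_cancel₀ hp0.ne', mul_one]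
    have hSuv : (∫⁻ θ in Set.Ioi (0:ℝ), g θ * ENNReal.ofReal (min x⁻¹ θ⁻¹)) =
        ∫⁻ θ in Set.Ioi (0:ℝ),
          ((fun θ => ENNReal.ofReal (min x⁻¹ θ⁻¹) ^ q⁻¹ *
              ENNReal.ofReal (θ ^ (-(q⁻¹ * p⁻¹)))) *
           (fun θ => ENNReal.ofReal (min x⁻¹ θ⁻¹) ^ p⁻¹ *
              ENNReal.ofReal (θ ^ (q⁻¹ * p⁻¹)) * g θ)) θ := by
      refine setLIntegral_congr_fun measurableSet_Ioi (fun θ hθ => ?_)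
      have hθ' : (0:ℝ) < θ := hθ
      simp only [Pi.mul_apply]
      have e1 : ENNReal.ofReal (min x⁻¹ θ⁻¹) ^ q⁻¹ * ENNReal.ofReal (min x⁻¹ θ⁻¹) ^ p⁻¹
          = ENNReal.ofReal (min x⁻¹ θ⁻¹) := by
        rw [← ENNReal.rpow_add _ _ (hKpos hx hθ') ENNReal.ofReal_ne_top,
          show q⁻¹ + p⁻¹ = 1 by linarith, ENNReal.rpow_one]
      have e2 : ENNReal.ofReal (θ ^ (-(q⁻¹ * p⁻¹))) * ENNReal.ofReal (θ ^ (q⁻¹ * p⁻¹)) = 1 := by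
        rw [← ENNReal.ofReal_mul (by positivity), ← Real.rpow_add hθ', neg_add_cancel,
          Real.rpow_zero, ENNReal.ofReal_one]
      calc g θ * ENNReal.ofReal (min x⁻¹ θ⁻¹)
          = (ENNReal.ofReal (min x⁻¹ θ⁻¹) ^ q⁻¹ * ENNReal.ofReal (min x⁻¹ θ⁻¹) ^ p⁻¹) *
            (ENNReal.ofReal (θ ^ (-(q⁻¹ * p⁻¹))) * ENNReal.ofReal (θ ^ (q⁻¹ * p⁻¹))) * g θ := by
            rw [e1, e2]; ring
        _ = _ := by ring
    have hu : ∫⁻ θ in Set.Ioi (0:ℝ),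
        (ENNReal.ofReal (min x⁻¹ θ⁻¹) ^ q⁻¹ * ENNReal.ofReal (θ ^ (-(q⁻¹ * p⁻¹)))) ^ q
        = ENNReal.ofReal (p * q * x ^ (-p⁻¹)) := by
      have hcong : ∀ θ ∈ Set.Ioi (0:ℝ),
          (ENNReal.ofReal (min x⁻¹ θ⁻¹) ^ q⁻¹ * ENNReal.ofReal (θ ^ (-(q⁻¹ * p⁻¹)))) ^ q
          = ENNReal.ofReal (min x⁻¹ θ⁻¹ * θ ^ (-p⁻¹)) := by
        intro θ hθ
        have hθ' : (0:ℝ) < θ := hθ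
        rw [ENNReal.mul_rpow_of_nonneg _ _ hq0.le, ← ENNReal.rpow_mul,
          inv_mul_cancel₀ hq0.ne', ENNReal.rpow_one,
          ENNReal.ofReal_rpow_of_pos (by positivity), ← Real.rpow_mul hθ'.le,
          show -(q⁻¹ * p⁻¹) * q = -p⁻¹ by field_simp,
          ← ENNReal.ofReal_mul (by positivity)]
      rw [setLIntegral_congr_fun measurableSet_Ioi hcong,
        lint_ker hinvp hinvp1 hx,
        show (p⁻¹ * (1 - p⁻¹))⁻¹ = p * q by
          rw [hpq.one_sub_inv, mul_inv, inv_inv, inv_inv, mul_comm]]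
    have hv : ∫⁻ θ in Set.Ioi (0:ℝ),
        (ENNReal.ofReal (min x⁻¹ θ⁻¹) ^ p⁻¹ * ENNReal.ofReal (θ ^ (q⁻¹ * p⁻¹)) * g θ) ^ p
        = ∫⁻ θ in Set.Ioi (0:ℝ),
            ENNReal.ofReal (min x⁻¹ θ⁻¹) * ENNReal.ofReal (θ ^ q⁻¹) * g θ ^ p := by
      refine setLIntegral_congr_fun measurableSet_Ioi (fun θ hθ => ?_)
      have hθ' : (0:ℝ) < θ := hθ
      rw [ENNReal.mul_rpow_of_nonneg _ _ hp0.le, ENNReal.mul_rpow_of_nonneg _ _ hp0.le,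
        ← ENNReal.rpow_mul, inv_mul_cancel₀ hp0.ne', ENNReal.rpow_one,
        ENNReal.ofReal_rpow_of_pos (by positivity), ← Real.rpow_mul hθ'.le, hc]
    have hH := ENNReal.lintegral_mul_le_Lp_mul_Lq (volume.restrict (Set.Ioi (0:ℝ))) hpq.symm
      (Measurable.aemeasurable (by fun_prop) :
        AEMeasurable (fun θ => ENNReal.ofReal (min x⁻¹ θ⁻¹) ^ q⁻¹ *
          ENNReal.ofReal (θ ^ (-(q⁻¹ * p⁻¹)))) _)
      (Measurable.aemeasurable (by fun_prop) :
        AEMeasurable (fun θ => ENNReal.ofReal (min x⁻¹ θ⁻¹) ^ p⁻¹ *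
          ENNReal.ofReal (θ ^ (q⁻¹ * p⁻¹)) * g θ) _)
    rw [hSuv]
    calc (∫⁻ θ in Set.Ioi (0:ℝ), _) ^ p
        ≤ ((∫⁻ θ in Set.Ioi (0:ℝ),
            (ENNReal.ofReal (min x⁻¹ θ⁻¹) ^ q⁻¹ * ENNReal.ofReal (θ ^ (-(q⁻¹ * p⁻¹)))) ^ q) ^ (1/q) *
           (∫⁻ θ in Set.Ioi (0:ℝ),
            (ENNReal.ofReal (min x⁻¹ θ⁻¹) ^ p⁻¹ * ENNReal.ofReal (θ ^ (q⁻¹ * p⁻¹)) * g θ) ^ p) ^ (1/p)) ^ p :=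
          ENNReal.rpow_le_rpow hH hp0.le
      _ = _ := by
          rw [hu, hv, ENNReal.mul_rpow_of_nonneg _ _ hp0.le, ← ENNReal.rpow_mul,
            ← ENNReal.rpow_mul, one_div, one_div, inv_mul_cancel₀ hp0.ne', ENNReal.rpow_one,
            show q⁻¹ * p = p * q⁻¹ by ring,
            ENNReal.ofReal_rpow_of_pos (by positivity),
            Real.mul_rpow (by positivity) (by positivity),
            ← Real.rpow_mul hx.le,
            show -p⁻¹ * (p * q⁻¹) = -q⁻¹ by field_simp,
            ENNReal.ofReal_mul (by positivity), mul_assoc]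
  -- Step B : bound the norm of Tf by the lintegral of the majorant
  have stepB : eLpNorm (fun x : ℝ => ∫ θ in Set.Ioi (0:ℝ), f θ * ((Int.fract (θ / x) / θ : ℝ) : ℂ))
      (ENNReal.ofReal p) (volume.restrict (Set.Ioi 0)) ≤
      (∫⁻ x in Set.Ioi (0:ℝ),
        (∫⁻ θ in Set.Ioi (0:ℝ), g θ * ENNReal.ofReal (min x⁻¹ θ⁻¹)) ^ p) ^ (1/p) := by
    rw [eLpNorm_eq_lintegral_rpow_enorm_toReal hP0 hPt, hPr]
    refine ENNReal.rpow_le_rpow ?_ (by positivity)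
    refine lintegral_mono_ae ((ae_restrict_iff' measurableSet_Ioi).2
      (ae_of_all _ fun x hx => ?_))
    refine ENNReal.rpow_le_rpow ?_ hp0.le
    calc (‖∫ θ in Set.Ioi (0:ℝ), f θ * ((Int.fract (θ / x) / θ : ℝ) : ℂ)‖₊ : ℝ≥0∞)
        ≤ ∫⁻ θ in Set.Ioi (0:ℝ), ↑‖f θ * ((Int.fract (θ / x) / θ : ℝ) : ℂ)‖₊ :=
          enorm_integral_le_lintegral_enorm _
      _ ≤ ∫⁻ θ in Set.Ioi (0:ℝ), g θ * ENNReal.ofReal (min x⁻¹ θ⁻¹) := by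
          refine lintegral_mono_ae ?_
          filter_upwards [hgeq, ae_restrict_mem measurableSet_Ioi] with θ h1 h2
          refine le_trans (hbound hx h2) (le_of_eq ?_)
          exact congrArg (fun t => t * ENNReal.ofReal (min x⁻¹ θ⁻¹)) h1
  -- the double integral, after swapping
  have hJ : (∫⁻ x in Set.Ioi (0:ℝ), ENNReal.ofReal (x ^ (-q⁻¹)) *
        ∫⁻ θ in Set.Ioi (0:ℝ),
          ENNReal.ofReal (min x⁻¹ θ⁻¹) * ENNReal.ofReal (θ ^ q⁻¹) * g θ ^ p)
      = ENNReal.ofReal (p*q) * ∫⁻ θ in Set.Ioi (0:ℝ), g θ ^ p := by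
    have h1 : ∀ x : ℝ, ENNReal.ofReal (x ^ (-q⁻¹)) *
        (∫⁻ θ in Set.Ioi (0:ℝ),
          ENNReal.ofReal (min x⁻¹ θ⁻¹) * ENNReal.ofReal (θ ^ q⁻¹) * g θ ^ p)
        = ∫⁻ θ in Set.Ioi (0:ℝ), ENNReal.ofReal (x ^ (-q⁻¹)) *
            (ENNReal.ofReal (min x⁻¹ θ⁻¹) * ENNReal.ofReal (θ ^ q⁻¹) * g θ ^ p) :=
      fun x => (lintegral_const_mul' _ _ ENNReal.ofReal_ne_top).symm
    rw [lintegral_congr h1, lintegral_lintegral_swap (Measurable.aemeasurable (by fun_prop))]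
    have h2 : ∀ θ ∈ Set.Ioi (0:ℝ),
        (∫⁻ x in Set.Ioi (0:ℝ), ENNReal.ofReal (x ^ (-q⁻¹)) *
          (ENNReal.ofReal (min x⁻¹ θ⁻¹) * ENNReal.ofReal (θ ^ q⁻¹) * g θ ^ p))
        = ENNReal.ofReal (p*q) * g θ ^ p := by
      intro θ hθ
      have hθ' : (0:ℝ) < θ := hθ
      have hre : ∀ x : ℝ, ENNReal.ofReal (x ^ (-q⁻¹)) *
          (ENNReal.ofReal (min x⁻¹ θ⁻¹) * ENNReal.ofReal (θ ^ q⁻¹) * g θ ^ p)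
          = (ENNReal.ofReal (θ ^ q⁻¹) * g θ ^ p) *
            (ENNReal.ofReal (min x⁻¹ θ⁻¹) * ENNReal.ofReal (x ^ (-q⁻¹))) := fun x => by ring
      rw [lintegral_congr hre, lintegral_const_mul _ (by fun_prop)]
      have h3 : (∫⁻ x in Set.Ioi (0:ℝ),
          ENNReal.ofReal (min x⁻¹ θ⁻¹) * ENNReal.ofReal (x ^ (-q⁻¹)))
          = ENNReal.ofReal (p * q * θ ^ (-q⁻¹)) := by
        have hcong : ∀ x ∈ Set.Ioi (0:ℝ),
            ENNReal.ofReal (min x⁻¹ θ⁻¹) * ENNReal.ofReal (x ^ (-q⁻¹))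
            = ENNReal.ofReal (min θ⁻¹ x⁻¹ * x ^ (-q⁻¹)) := by
          intro x hx'
          have hx'' : (0:ℝ) < x := hx'
          rw [min_comm, ← ENNReal.ofReal_mul (by positivity)]
        rw [setLIntegral_congr_fun measurableSet_Ioi hcong,
          lint_ker hinvq hinvq1 hθ',
          show (q⁻¹ * (1 - q⁻¹))⁻¹ = p * q by
            rw [hpq.symm.one_sub_inv, mul_inv, inv_inv, inv_inv, mul_comm]]
      rw [h3]
      have e3 : ENNReal.ofReal (θ ^ q⁻¹) * ENNReal.ofReal (θ ^ (-q⁻¹)) = 1 := by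
        rw [← ENNReal.ofReal_mul (by positivity), ← Real.rpow_add hθ', add_neg_cancel,
          Real.rpow_zero, ENNReal.ofReal_one]
      rw [ENNReal.ofReal_mul (by positivity)]
      calc (ENNReal.ofReal (θ ^ q⁻¹) * g θ ^ p) *
            (ENNReal.ofReal (p*q) * ENNReal.ofReal (θ ^ (-q⁻¹)))
          = (ENNReal.ofReal (θ ^ q⁻¹) * ENNReal.ofReal (θ ^ (-q⁻¹))) *
            (ENNReal.ofReal (p*q) * g θ ^ p) := by ring
        _ = ENNReal.ofReal (p*q) * g θ ^ p := by rw [e3, one_mul]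
    rw [setLIntegral_congr_fun measurableSet_Ioi h2,
      lintegral_const_mul' _ _ ENNReal.ofReal_ne_top]
  -- Step D : integrate the pointwise estimate
  have stepD : (∫⁻ x in Set.Ioi (0:ℝ),
      (∫⁻ θ in Set.Ioi (0:ℝ), g θ * ENNReal.ofReal (min x⁻¹ θ⁻¹)) ^ p)
      ≤ ENNReal.ofReal ((p*q) ^ (p * q⁻¹)) *
        (ENNReal.ofReal (p*q) * ∫⁻ θ in Set.Ioi (0:ℝ), g θ ^ p) := by
    calc (∫⁻ x in Set.Ioi (0:ℝ),
        (∫⁻ θ in Set.Ioi (0:ℝ), g θ * ENNReal.ofReal (min x⁻¹ θ⁻¹)) ^ p)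
        ≤ ∫⁻ x in Set.Ioi (0:ℝ), ENNReal.ofReal ((p*q) ^ (p * q⁻¹)) *
            (ENNReal.ofReal (x ^ (-q⁻¹)) *
              (∫⁻ θ in Set.Ioi (0:ℝ),
                ENNReal.ofReal (min x⁻¹ θ⁻¹) * ENNReal.ofReal (θ ^ q⁻¹) * g θ ^ p)) :=
          setLIntegral_mono' measurableSet_Ioi fun x hx => stepC x hx
      _ = ENNReal.ofReal ((p*q) ^ (p * q⁻¹)) *
            ∫⁻ x in Set.Ioi (0:ℝ), ENNReal.ofReal (x ^ (-q⁻¹)) *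
              (∫⁻ θ in Set.Ioi (0:ℝ),
                ENNReal.ofReal (min x⁻¹ θ⁻¹) * ENNReal.ofReal (θ ^ q⁻¹) * g θ ^ p) :=
          lintegral_const_mul' _ _ ENNReal.ofReal_ne_top
      _ = _ := by rw [hJ]
  -- conclusion
  refine le_trans stepB ?_
  calc (∫⁻ x in Set.Ioi (0:ℝ),
          (∫⁻ θ in Set.Ioi (0:ℝ), g θ * ENNReal.ofReal (min x⁻¹ θ⁻¹)) ^ p) ^ (1/p)
      ≤ (ENNReal.ofReal ((p*q) ^ (p * q⁻¹)) *
          (ENNReal.ofReal (p*q) * ∫⁻ θ in Set.Ioi (0:ℝ), g θ ^ p)) ^ (1/p) :=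
        ENNReal.rpow_le_rpow stepD (by positivity)
    _ = ENNReal.ofReal (p*q) * (∫⁻ θ in Set.Ioi (0:ℝ), g θ ^ p) ^ (1/p) := by
        rw [← mul_assoc, ← ENNReal.ofReal_mul (by positivity),
          ENNReal.mul_rpow_of_nonneg _ _ (by positivity),
          ENNReal.ofReal_rpow_of_pos (by positivity),
          show (p*q) ^ (p * q⁻¹) * (p*q) = (p*q) ^ (p * q⁻¹ + 1) by
            rw [Real.rpow_add (by positivity), Real.rpow_one],
          ← Real.rpow_mul (by positivity),
          show (p * q⁻¹ + 1) * (1/p) = q⁻¹ + p⁻¹ by field_simp,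
          show q⁻¹ + p⁻¹ = 1 by linarith, Real.rpow_one]
    _ = ENNReal.ofReal (p*q) *
          eLpNorm f (ENNReal.ofReal p) (volume.restrict (Set.Ioi 0)) := by rw [hfnorm]
end
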